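/- (Lemma 1, high-probability form.) With the probe setup below, fix i ∈ ℕ, k ≥ 2, ε > 0, and δ ∈ (0,1). If k is large enough that 2^{M+2}·k·exp(−(k−1)·ε²/2) ≤ δ, then with probability at least 1 − δ we have TV(P̄_l^{l+t}, P̂_l^{l+t}) < ε simultaneously for every start index l ∈ {i+1, …, i+k} and every window length t ∈ {k−1, k}. -/

import Mathlib

open MeasureTheory Finset

/-- Probe indicator: `Z^S_τ ω = 𝟙{Y τ ω ∈ S}`, as a real number. -/
noncomputable def probeZ {Ω : Type*} {M : ℕ} (Y : ℕ → Ω → Fin M)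
    (S : Finset (Fin M)) (τ : ℕ) (ω : Ω) : ℝ :=
  if Y τ ω ∈ S then 1 else 0

/-- Conditional probability of the probe event given the past:
`p^S_τ = E[Z^S_τ ∣ 𝓕_{τ-1}]`. -/
noncomputable def probeP {Ω : Type*} {m0 : MeasurableSpace Ω} (μ : Measure Ω) {M : ℕ}
    (ℱ : Filtration ℕ m0) (Y : ℕ → Ω → Fin M) (S : Finset (Fin M)) (τ : ℕ) : Ω → ℝ :=
  μ[probeZ Y S τ | ℱ (τ - 1)]


lemma convex_exp_bound (lam x : ℝ) (h1 : -1 ≤ x) (h2 : x ≤ 1) :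
    Real.exp (lam * x) ≤ ((1 - x) * Real.exp (-lam) + (1 + x) * Real.exp lam) / 2 := by
  have h := convexOn_exp.2 (Set.mem_univ (-lam)) (Set.mem_univ lam)
    (show (0:ℝ) ≤ (1 - x) / 2 by linarith) (show (0:ℝ) ≤ (1 + x) / 2 by linarith)
    (show (1 - x) / 2 + (1 + x) / 2 = 1 by ring)
  simp only [smul_eq_mul] at h
  calc Real.exp (lam * x) = Real.exp ((1 - x) / 2 * (-lam) + (1 + x) / 2 * lam) := by ring_nf
    _ ≤ (1 - x) / 2 * Real.exp (-lam) + (1 + x) / 2 * Real.exp lam := h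
    _ = ((1 - x) * Real.exp (-lam) + (1 + x) * Real.exp lam) / 2 := by ring

lemma bernoulli_mgf_le (lam p : ℝ) (hp0 : 0 ≤ p) (hp1 : p ≤ 1) :
    Real.exp (-(lam * p)) * (1 - p + p * Real.exp lam) ≤ Real.exp (lam ^ 2 / 2) := by
  have k1 := convex_exp_bound lam (-p) (by linarith) (by linarith)
  have k2 := convex_exp_bound lam (1 - p) (by linarith) (by linarith)
  have hc : (Real.exp (-lam) + Real.exp lam) / 2 ≤ Real.exp (lam ^ 2 / 2) := by
    have := Real.cosh_le_exp_half_sq lam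
    rwa [Real.cosh_eq, add_comm] at this
  have e1 : Real.exp (-(lam * p)) * (1 - p + p * Real.exp lam)
      = (1 - p) * Real.exp (lam * (-p)) + p * Real.exp (lam * (1 - p)) := by
    rw [show lam * (1 - p) = lam + -(lam * p) by ring, Real.exp_add,
      show lam * (-p) = -(lam * p) by ring]
    ring
  rw [e1]
  nlinarith [mul_le_mul_of_nonneg_left k1 (by linarith : (0:ℝ) ≤ 1 - p),
    mul_le_mul_of_nonneg_left k2 hp0]

section Basic
variable {Ω : Type*} {m0 : MeasurableSpace Ω} {μ : Measure Ω}
  {ℱ : Filtration ℕ m0} {M : ℕ} {Y : ℕ → Ω → Fin M}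

lemma probeZ_meas (hY : ∀ τ, Measurable[ℱ τ] (Y τ)) (S : Finset (Fin M)) (τ : ℕ) :
    Measurable[ℱ τ] (probeZ Y S τ) := by
  unfold probeZ
  exact Measurable.ite (hY τ ((S : Set (Fin M)).toFinite.measurableSet))
    measurable_const measurable_const

lemma probeZ_meas0 (hY : ∀ τ, Measurable[ℱ τ] (Y τ)) (S : Finset (Fin M)) (τ : ℕ) :
    Measurable (probeZ Y S τ) :=
  (probeZ_meas hY S τ).mono (ℱ.le τ) le_rfl

lemma probeZ_nonneg (S : Finset (Fin M)) (τ : ℕ) (ω : Ω) : 0 ≤ probeZ Y S τ ω := by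
  unfold probeZ; split <;> norm_num

lemma probeZ_le_one (S : Finset (Fin M)) (τ : ℕ) (ω : Ω) : probeZ Y S τ ω ≤ 1 := by
  unfold probeZ; split <;> norm_num

lemma probeZ_int [IsProbabilityMeasure μ] (hY : ∀ τ, Measurable[ℱ τ] (Y τ))
    (S : Finset (Fin M)) (τ : ℕ) : Integrable (probeZ Y S τ) μ := by
  refine (integrable_const (1:ℝ)).mono' (probeZ_meas0 hY S τ).aestronglyMeasurable ?_
  refine ae_of_all _ fun ω => ?_
  rw [Real.norm_eq_abs, abs_le]
  exact ⟨by linarith [probeZ_nonneg (Y := Y) S τ ω], probeZ_le_one S τ ω⟩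

lemma probeP_sm (S : Finset (Fin M)) (τ : ℕ) :
    StronglyMeasurable[ℱ (τ - 1)] (probeP μ ℱ Y S τ) := stronglyMeasurable_condExp

lemma probeP_meas0 (S : Finset (Fin M)) (τ : ℕ) : Measurable (probeP μ ℱ Y S τ) :=
  ((probeP_sm (μ := μ) (ℱ := ℱ) (Y := Y) S τ).mono (ℱ.le _)).measurable

lemma probeP_nonneg (S : Finset (Fin M)) (τ : ℕ) :
    ∀ᵐ ω ∂μ, 0 ≤ probeP μ ℱ Y S τ ω := by
  have h : 0 ≤ᵐ[μ] probeP μ ℱ Y S τ := condExp_nonneg (ae_of_all _ (probeZ_nonneg S τ))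
  filter_upwards [h] with ω hω using by simpa using hω

lemma probeP_le_one [IsProbabilityMeasure μ] (hY : ∀ τ, Measurable[ℱ τ] (Y τ))
    (S : Finset (Fin M)) (τ : ℕ) : ∀ᵐ ω ∂μ, probeP μ ℱ Y S τ ω ≤ 1 := by
  have h := condExp_mono (m := ℱ (τ - 1)) (μ := μ) (probeZ_int hY S τ)
    (integrable_const (1:ℝ)) (ae_of_all _ (probeZ_le_one (Y := Y) S τ))
  have hc : μ[(fun _ => (1:ℝ)) | ℱ (τ - 1)] = fun _ => (1:ℝ) := condExp_const (ℱ.le _) 1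
  rw [hc] at h
  filter_upwards [h] with ω hω using by simpa [probeP] using hω

lemma probeP_int (S : Finset (Fin M)) (τ : ℕ) : Integrable (probeP μ ℱ Y S τ) μ :=
  integrable_condExp

/-- `E[exp(c·Z) | 𝓕_{τ-1}] = 1 + (e^c - 1)·p` since `Z ∈ {0,1}`. -/
lemma condexp_exp_probeZ [IsProbabilityMeasure μ] (hY : ∀ τ, Measurable[ℱ τ] (Y τ))
    (c : ℝ) (S : Finset (Fin M)) (τ : ℕ) :
    μ[fun ω => Real.exp (c * probeZ Y S τ ω) | ℱ (τ - 1)] =ᵐ[μ]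
    fun ω => 1 + (Real.exp c - 1) * probeP μ ℱ Y S τ ω := by
  have hfun : (fun ω => Real.exp (c * probeZ Y S τ ω)) =
      (fun _ => (1:ℝ)) + (Real.exp c - 1) • probeZ Y S τ := by
    funext ω
    simp only [Pi.add_apply, Pi.smul_apply, smul_eq_mul]
    unfold probeZ
    split <;> simp
  rw [hfun]
  have h1 := condExp_add (μ := μ) (m := ℱ (τ - 1)) (integrable_const (1:ℝ))
    ((probeZ_int hY S τ).smul (Real.exp c - 1))
  have h2 := condExp_smul (μ := μ) (m := ℱ (τ - 1)) (Real.exp c - 1) (probeZ Y S τ)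
  rw [condExp_const (ℱ.le _)] at h1
  filter_upwards [h1, h2] with ω e1 e2
  simp only [Pi.add_apply] at e1
  rw [e1, e2]
  simp only [Pi.smul_apply, smul_eq_mul]
  rfl
end Basic

/-- Signed deviation sum `∑_{τ=l+1}^{l+t} s·(p_τ - Z_τ)`. -/
noncomputable def devSum {Ω : Type*} {m0 : MeasurableSpace Ω} (μ : Measure Ω) {M : ℕ}
    (ℱ : Filtration ℕ m0) (Y : ℕ → Ω → Fin M) (s : ℝ) (S : Finset (Fin M))
    (l t : ℕ) (ω : Ω) : ℝ :=
  ∑ τ ∈ Icc (l + 1) (l + t), s * (probeP μ ℱ Y S τ ω - probeZ Y S τ ω)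

section Dev
variable {Ω : Type*} {m0 : MeasurableSpace Ω} {μ : Measure Ω}
  {ℱ : Filtration ℕ m0} {M : ℕ} {Y : ℕ → Ω → Fin M}

lemma devSum_meas0 (hY : ∀ τ, Measurable[ℱ τ] (Y τ)) (s : ℝ) (S : Finset (Fin M))
    (l t : ℕ) : Measurable (devSum μ ℱ Y s S l t) := by
  apply Finset.measurable_sum
  intro τ _
  exact ((probeP_meas0 S τ).sub (probeZ_meas0 hY S τ)).const_mul s

lemma devSum_sm (hY : ∀ τ, Measurable[ℱ τ] (Y τ)) (s : ℝ) (S : Finset (Fin M))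
    (l t : ℕ) : StronglyMeasurable[ℱ (l + t)] (devSum μ ℱ Y s S l t) := by
  apply Finset.stronglyMeasurable_fun_sum
  intro τ hτ
  rw [Finset.mem_Icc] at hτ
  refine (((probeP_sm S τ).mono (ℱ.mono (by omega))).sub
    (((probeZ_meas hY S τ).stronglyMeasurable).mono (ℱ.mono (by omega)))).const_mul s

lemma devSum_abs_le [IsProbabilityMeasure μ] (hY : ∀ τ, Measurable[ℱ τ] (Y τ))
    {s : ℝ} (hs : s = 1 ∨ s = -1) (S : Finset (Fin M)) (l t : ℕ) :
    ∀ᵐ ω ∂μ, |devSum μ ℱ Y s S l t ω| ≤ t := by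
  have hp : ∀ᵐ ω ∂μ, ∀ τ ∈ Icc (l + 1) (l + t),
      0 ≤ probeP μ ℱ Y S τ ω ∧ probeP μ ℱ Y S τ ω ≤ 1 := by
    rw [Filter.eventually_all_finset]
    intro τ _
    filter_upwards [probeP_nonneg (μ := μ) (ℱ := ℱ) (Y := Y) S τ, probeP_le_one hY S τ]
      with ω h1 h2 using ⟨h1, h2⟩
  filter_upwards [hp] with ω hω
  calc |devSum μ ℱ Y s S l t ω|
      ≤ ∑ τ ∈ Icc (l + 1) (l + t), |s * (probeP μ ℱ Y S τ ω - probeZ Y S τ ω)| :=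
        Finset.abs_sum_le_sum_abs _ _
    _ ≤ ∑ τ ∈ Icc (l + 1) (l + t), 1 := by
        refine Finset.sum_le_sum fun τ hτ => ?_
        have h1 := (hω τ hτ).1
        have h2 := (hω τ hτ).2
        have h3 := probeZ_nonneg (Y := Y) S τ ω
        have h4 := probeZ_le_one (Y := Y) S τ ω
        have habs : |probeP μ ℱ Y S τ ω - probeZ Y S τ ω| ≤ 1 :=
          abs_le.2 ⟨by linarith, by linarith⟩
        have habs' : |probeZ Y S τ ω - probeP μ ℱ Y S τ ω| ≤ 1 := by
          rw [abs_sub_comm]; exact habs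
        rcases hs with h | h
        · rw [h]; simpa [abs_mul] using habs
        · rw [h]; simpa [abs_mul] using habs'
    _ = t := by
        rw [Finset.sum_const, Nat.card_Icc, nsmul_eq_mul, mul_one]
        simp

lemma exp_devSum_int [IsProbabilityMeasure μ] (hY : ∀ τ, Measurable[ℱ τ] (Y τ))
    {s : ℝ} (hs : s = 1 ∨ s = -1) (c : ℝ) (S : Finset (Fin M)) (l t : ℕ) :
    Integrable (fun ω => Real.exp (c * devSum μ ℱ Y s S l t ω)) μ := by
  refine (integrable_const (Real.exp (|c| * t))).mono'
    ((Real.measurable_exp.comp ((devSum_meas0 hY s S l t).const_mul c)).aestronglyMeasurable) ?_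
  filter_upwards [devSum_abs_le hY hs S l t] with ω hω
  rw [Real.norm_eq_abs, abs_of_pos (Real.exp_pos _), Real.exp_le_exp]
  calc c * devSum μ ℱ Y s S l t ω ≤ |c * devSum μ ℱ Y s S l t ω| := le_abs_self _
    _ = |c| * |devSum μ ℱ Y s S l t ω| := abs_mul _ _
    _ ≤ |c| * t := by exact mul_le_mul_of_nonneg_left hω (abs_nonneg c)
end Dev

section MGF
variable {Ω : Type*} {m0 : MeasurableSpace Ω} {μ : Measure Ω}
  {ℱ : Filtration ℕ m0} {M : ℕ} {Y : ℕ → Ω → Fin M}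

/-- One-step conditional mgf bound (Hoeffding's lemma for the probe martingale). -/
lemma condexp_exp_dev_le [IsProbabilityMeasure μ] (hY : ∀ τ, Measurable[ℱ τ] (Y τ))
    {s : ℝ} (hs : s = 1 ∨ s = -1) (c : ℝ) (S : Finset (Fin M)) (τ : ℕ) :
    μ[fun ω => Real.exp (c * (s * (probeP μ ℱ Y S τ ω - probeZ Y S τ ω))) | ℱ (τ - 1)]
      ≤ᵐ[μ] fun _ => Real.exp (c ^ 2 / 2) := by
  set g : Ω → ℝ := fun ω => Real.exp (c * s * probeP μ ℱ Y S τ ω) with hg_def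
  set h : Ω → ℝ := fun ω => Real.exp (-(c * s) * probeZ Y S τ ω) with hh_def
  have hfg : (fun ω => Real.exp (c * (s * (probeP μ ℱ Y S τ ω - probeZ Y S τ ω)))) = g * h := by
    funext ω
    simp only [hg_def, hh_def, Pi.mul_apply, ← Real.exp_add]
    congr 1
    ring
  have hg_sm : StronglyMeasurable[ℱ (τ - 1)] g :=
    Real.continuous_exp.comp_stronglyMeasurable ((probeP_sm S τ).const_mul (c * s))
  have hg_bd : ∀ᵐ ω ∂μ, |g ω| ≤ Real.exp |c * s| := by
    filter_upwards [probeP_nonneg (μ := μ) (ℱ := ℱ) (Y := Y) S τ, probeP_le_one hY S τ]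
      with ω h1 h2
    rw [abs_of_pos (Real.exp_pos _), Real.exp_le_exp]
    calc c * s * probeP μ ℱ Y S τ ω ≤ |c * s * probeP μ ℱ Y S τ ω| := le_abs_self _
      _ = |c * s| * |probeP μ ℱ Y S τ ω| := abs_mul _ _
      _ ≤ |c * s| * 1 := mul_le_mul_of_nonneg_left (abs_le.2 ⟨by linarith, h2⟩) (abs_nonneg _)
      _ = |c * s| := mul_one _
  have hh_bd : ∀ ω, |h ω| ≤ Real.exp |c * s| := by
    intro ω
    rw [abs_of_pos (Real.exp_pos _), Real.exp_le_exp]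
    calc -(c * s) * probeZ Y S τ ω ≤ |(-(c * s)) * probeZ Y S τ ω| := le_abs_self _
      _ = |c * s| * |probeZ Y S τ ω| := by rw [abs_mul, abs_neg]
      _ ≤ |c * s| * 1 := mul_le_mul_of_nonneg_left
          (abs_le.2 ⟨by linarith [probeZ_nonneg (Y := Y) S τ ω], probeZ_le_one S τ ω⟩)
          (abs_nonneg _)
      _ = |c * s| := mul_one _
  have hh_meas : Measurable h := Real.measurable_exp.comp ((probeZ_meas0 hY S τ).const_mul _)
  have hh_int : Integrable h μ :=
    (integrable_const (Real.exp |c * s|)).mono' hh_meas.aestronglyMeasurable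
      (ae_of_all _ fun ω => by rw [Real.norm_eq_abs]; exact hh_bd ω)
  have hgh_int : Integrable (g * h) μ := by
    refine (integrable_const (Real.exp |c * s| * Real.exp |c * s|)).mono'
      ((((probeP_meas0 S τ).const_mul _).exp.mul hh_meas).aestronglyMeasurable) ?_
    filter_upwards [hg_bd] with ω h1
    rw [Pi.mul_apply, Real.norm_eq_abs, abs_mul]
    exact mul_le_mul h1 (hh_bd ω) (abs_nonneg _) (Real.exp_pos _).le
  have hmul := condExp_mul_of_stronglyMeasurable_left hg_sm hgh_int hh_int
  have hcond := condexp_exp_probeZ (μ := μ) (ℱ := ℱ) hY (-(c * s)) S τ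
  rw [hfg]
  have hs2 : s ^ 2 = 1 := by rcases hs with h | h <;> rw [h] <;> norm_num
  filter_upwards [hmul, hcond, probeP_nonneg (μ := μ) (ℱ := ℱ) (Y := Y) S τ,
    probeP_le_one hY S τ] with ω e1 e2 hp0 hp1
  rw [e1, Pi.mul_apply, e2]
  have key := bernoulli_mgf_le (-(c * s)) (probeP μ ℱ Y S τ ω) hp0 hp1
  have e3 : g ω * (1 + (Real.exp (-(c * s)) - 1) * probeP μ ℱ Y S τ ω)
      = Real.exp (-(-(c * s) * probeP μ ℱ Y S τ ω)) *
        (1 - probeP μ ℱ Y S τ ω + probeP μ ℱ Y S τ ω * Real.exp (-(c * s))) := by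
    simp only [hg_def]
    rw [show -(-(c * s) * probeP μ ℱ Y S τ ω) = c * s * probeP μ ℱ Y S τ ω by ring]
    ring
  rw [e3]
  calc Real.exp (-(-(c * s) * probeP μ ℱ Y S τ ω)) *
        (1 - probeP μ ℱ Y S τ ω + probeP μ ℱ Y S τ ω * Real.exp (-(c * s)))
      ≤ Real.exp ((-(c * s)) ^ 2 / 2) := key
    _ = Real.exp (c ^ 2 / 2) := by rw [show (-(c * s)) ^ 2 = c ^ 2 * s ^ 2 by ring, hs2, mul_one]

/-- MGF bound for the deviation sum: `E[exp(c·D_t)] ≤ exp(t·c²/2)`. -/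
lemma mgf_le [IsProbabilityMeasure μ] (hY : ∀ τ, Measurable[ℱ τ] (Y τ))
    {s : ℝ} (hs : s = 1 ∨ s = -1) (c : ℝ) (S : Finset (Fin M)) (l : ℕ)
    (t : ℕ) : ∫ ω, Real.exp (c * devSum μ ℱ Y s S l t ω) ∂μ ≤ Real.exp (t * (c ^ 2 / 2)) := by
  induction t with
  | zero =>
    have he : devSum μ ℱ Y s S l 0 = fun _ => 0 := by
      funext ω; unfold devSum
      rw [Finset.Icc_eq_empty (by omega), Finset.sum_empty]
    rw [he]
    simp
  | succ t IH =>
    set m := ℱ (l + t) with hm_def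
    set τ' := l + t + 1 with hτ'_def
    set G : Ω → ℝ := fun ω => Real.exp (c * devSum μ ℱ Y s S l t ω) with hG_def
    set H : Ω → ℝ := fun ω =>
      Real.exp (c * (s * (probeP μ ℱ Y S τ' ω - probeZ Y S τ' ω))) with hH_def
    have hsplit : (fun ω => Real.exp (c * devSum μ ℱ Y s S l (t + 1) ω)) = G * H := by
      funext ω
      simp only [hG_def, hH_def, Pi.mul_apply, ← Real.exp_add]
      congr 1
      unfold devSum
      rw [show l + (t + 1) = (l + t) + 1 by omega,
        Finset.sum_Icc_succ_top (by omega : l + 1 ≤ l + t + 1)]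
      ring
    have hGH_int : Integrable (G * H) μ := by
      rw [← hsplit]; exact exp_devSum_int hY hs c S l (t + 1)
    have hG_int : Integrable G μ := exp_devSum_int hY hs c S l t
    have hHeq : H = fun ω => Real.exp (c * devSum μ ℱ Y s S (l + t) 1 ω) := by
      funext ω
      simp only [hH_def]
      congr 1
      unfold devSum
      rw [Finset.Icc_self, Finset.sum_singleton]
    have hH_int : Integrable H μ := by
      rw [hHeq]; exact exp_devSum_int hY hs c S (l + t) 1
    have hG_sm : StronglyMeasurable[m] G :=
      Real.continuous_exp.comp_stronglyMeasurable ((devSum_sm hY s S l t).const_mul c)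
    have hmul := condExp_mul_of_stronglyMeasurable_left hG_sm hGH_int hH_int
    have hcond : μ[H | m] ≤ᵐ[μ] fun _ => Real.exp (c ^ 2 / 2) := by
      have h := condexp_exp_dev_le (μ := μ) (ℱ := ℱ) hY hs c S τ'
      simp only [hτ'_def, Nat.add_sub_cancel] at h
      exact h
    calc ∫ ω, Real.exp (c * devSum μ ℱ Y s S l (t + 1) ω) ∂μ
        = ∫ ω, (G * H) ω ∂μ := by rw [hsplit]
      _ = ∫ ω, (μ[G * H | m]) ω ∂μ := (integral_condExp (ℱ.le _)).symm
      _ ≤ ∫ ω, G ω * Real.exp (c ^ 2 / 2) ∂μ := by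
          refine integral_mono_ae integrable_condExp (hG_int.mul_const _) ?_
          filter_upwards [hmul, hcond] with ω e1 e2
          rw [e1, Pi.mul_apply]
          exact mul_le_mul_of_nonneg_left (e2) (Real.exp_pos _).le
      _ = (∫ ω, G ω ∂μ) * Real.exp (c ^ 2 / 2) := integral_mul_const _ _
      _ ≤ Real.exp (t * (c ^ 2 / 2)) * Real.exp (c ^ 2 / 2) :=
          mul_le_mul_of_nonneg_right IH (Real.exp_pos _).le
      _ = Real.exp ((t + 1 : ℕ) * (c ^ 2 / 2)) := by
          rw [← Real.exp_add]; congr 1; push_cast; ring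

/-- Chernoff bound for one deviation event. -/
lemma event_bound [IsProbabilityMeasure μ] (hY : ∀ τ, Measurable[ℱ τ] (Y τ))
    {s : ℝ} (hs : s = 1 ∨ s = -1) {ε : ℝ} (hε : 0 < ε) (S : Finset (Fin M)) (l t : ℕ) :
    μ {ω | (t : ℝ) * ε ≤ devSum μ ℱ Y s S l t ω} ≤
      ENNReal.ofReal (Real.exp (-(t : ℝ) * ε ^ 2 / 2)) := by
  set f : Ω → ℝ := fun ω => Real.exp (ε * devSum μ ℱ Y s S l t ω) with hf_def
  have hf_nonneg : 0 ≤ᵐ[μ] f := ae_of_all _ fun ω => (Real.exp_pos _).le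
  have hf_int : Integrable f μ := exp_devSum_int hY hs ε S l t
  have hmarkov := mul_meas_ge_le_integral_of_nonneg hf_nonneg hf_int
    (Real.exp ((t : ℝ) * ε ^ 2))
  have hmgf := mgf_le (μ := μ) hY hs ε S l t
  have hsub : {ω | (t : ℝ) * ε ≤ devSum μ ℱ Y s S l t ω} ⊆
      {ω | Real.exp ((t : ℝ) * ε ^ 2) ≤ f ω} := by
    intro ω hω
    simp only [Set.mem_setOf_eq] at hω ⊢
    rw [hf_def, Real.exp_le_exp]
    nlinarith
  have h1 : Real.exp ((t : ℝ) * ε ^ 2) *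
      (μ {x | Real.exp ((t : ℝ) * ε ^ 2) ≤ f x}).toReal ≤ Real.exp ((t : ℝ) * (ε ^ 2 / 2)) :=
    le_trans hmarkov hmgf
  have h2 : (μ {x | Real.exp ((t : ℝ) * ε ^ 2) ≤ f x}).toReal ≤
      Real.exp (-(t : ℝ) * ε ^ 2 / 2) := by
    have hpos := Real.exp_pos ((t : ℝ) * ε ^ 2)
    rw [show Real.exp (-(t : ℝ) * ε ^ 2 / 2)
        = Real.exp ((t : ℝ) * (ε ^ 2 / 2)) / Real.exp ((t : ℝ) * ε ^ 2) by
      rw [← Real.exp_sub]; congr 1; ring]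
    rw [le_div_iff₀ hpos]
    linarith [h1]
  calc μ {ω | (t : ℝ) * ε ≤ devSum μ ℱ Y s S l t ω}
      ≤ μ {x | Real.exp ((t : ℝ) * ε ^ 2) ≤ f x} := measure_mono hsub
    _ = ENNReal.ofReal (μ {x | Real.exp ((t : ℝ) * ε ^ 2) ≤ f x}).toReal :=
        (ENNReal.ofReal_toReal (measure_ne_top μ _)).symm
    _ ≤ ENNReal.ofReal (Real.exp (-(t : ℝ) * ε ^ 2 / 2)) := ENNReal.ofReal_le_ofReal h2
end MGF

/-- Empirical mixture: `P̂_l^{l+t}(S) = (1/t) ∑_{τ=l+1}^{l+t} Z^S_τ`. -/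
noncomputable def empMix {Ω : Type*} {M : ℕ} (Y : ℕ → Ω → Fin M)
    (l t : ℕ) (S : Finset (Fin M)) (ω : Ω) : ℝ :=
  (1 / (t : ℝ)) * ∑ τ ∈ Icc (l + 1) (l + t), probeZ Y S τ ω

/-- True mixture: `P̄_l^{l+t}(S) = (1/t) ∑_{τ=l+1}^{l+t} p^S_τ`. -/
noncomputable def trueMix {Ω : Type*} {m0 : MeasurableSpace Ω} (μ : Measure Ω) {M : ℕ}
    (ℱ : Filtration ℕ m0) (Y : ℕ → Ω → Fin M)
    (l t : ℕ) (S : Finset (Fin M)) (ω : Ω) : ℝ :=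
  (1 / (t : ℝ)) * ∑ τ ∈ Icc (l + 1) (l + t), probeP μ ℱ Y S τ ω

/-- Total variation distance between the true and the empirical mixture, as the
supremum over all `2^M` subsets `S ⊆ Fin M` of `|P̄_l^{l+t}(S) − P̂_l^{l+t}(S)|`. -/
noncomputable def tvMix {Ω : Type*} {m0 : MeasurableSpace Ω} (μ : Measure Ω) {M : ℕ}
    (ℱ : Filtration ℕ m0) (Y : ℕ → Ω → Fin M) (l t : ℕ) (ω : Ω) : ℝ :=
  ⨆ S : Finset (Fin M), |trueMix μ ℱ Y l t S ω - empMix Y l t S ω|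


/-- **Lemma 1 (high-probability form).**
Fix `i ∈ ℕ`, `k ≥ 2`, `ε > 0` and `δ ∈ (0,1)`.  If `k` is large enough that
`2^{M+2} · k · exp(−(k−1) ε² / 2) ≤ δ`, then with probability at least `1 − δ` we
have `TV(P̄_l^{l+t}, P̂_l^{l+t}) < ε` simultaneously for every start index
`l ∈ {i+1, …, i+k}` and every window length `t ∈ {k−1, k}`. -/
theorem probe_concentration_whp {Ω : Type*} {m0 : MeasurableSpace Ω}
    (μ : Measure Ω) [IsProbabilityMeasure μ] (ℱ : Filtration ℕ m0)
    {M : ℕ} (hM : 1 ≤ M) (Y : ℕ → Ω → Fin M)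
    (hY : ∀ τ, Measurable[ℱ τ] (Y τ))
    (i k : ℕ) (hk : 2 ≤ k) {ε δ : ℝ} (hε : 0 < ε) (hδ : δ ∈ Set.Ioo (0 : ℝ) 1)
    (hkey : 2 ^ (M + 2) * k * Real.exp (-((k : ℝ) - 1) * ε ^ 2 / 2) ≤ δ) :
    ENNReal.ofReal (1 - δ) ≤
      μ {ω | ∀ l ∈ Icc (i + 1) (i + k), ∀ t ∈ ({k - 1, k} : Finset ℕ),
        tvMix μ ℱ Y l t ω < ε} := by
  obtain ⟨hδ0, hδ1⟩ := hδ
  -- index set for the union bound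
  set I : Finset (ℕ × ℕ × Finset (Fin M) × ℝ) :=
    (Icc (i + 1) (i + k)) ×ˢ (({k - 1, k} : Finset ℕ) ×ˢ
      ((Finset.univ : Finset (Finset (Fin M))) ×ˢ ({1, -1} : Finset ℝ))) with hI_def
  set E : ℕ × ℕ × Finset (Fin M) × ℝ → Set Ω := fun p =>
    {ω | (p.2.1 : ℝ) * ε ≤ devSum μ ℱ Y p.2.2.2 p.2.2.1 p.1 p.2.1 ω} with hE_def
  set bad : Set Ω := ⋃ p ∈ I, E p with hbad_def
  have hE_meas : ∀ p, MeasurableSet (E p) := fun p =>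
    measurableSet_le measurable_const (devSum_meas0 hY _ _ _ _)
  have hbad_meas : MeasurableSet bad :=
    MeasurableSet.biUnion I.countable_toSet fun p _ => hE_meas p
  -- per-event bound
  have hβ : ∀ p ∈ I, μ (E p) ≤ ENNReal.ofReal (Real.exp (-((k : ℝ) - 1) * ε ^ 2 / 2)) := by
    rintro ⟨l, t, S, s⟩ hp
    simp only [hI_def, Finset.mem_product, Finset.mem_insert, Finset.mem_singleton,
      Finset.mem_univ] at hp
    obtain ⟨-, ht, -, hrs⟩ := hp
    have hs : s = 1 ∨ s = -1 := hrs
    refine le_trans (event_bound hY hs hε S l t) (ENNReal.ofReal_le_ofReal ?_)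
    rw [Real.exp_le_exp]
    have htk : (k : ℝ) - 1 ≤ (t : ℝ) := by
      rcases ht with h | h
      · subst h; rw [Nat.cast_sub (by omega)]; norm_num
      · subst h; norm_num
    nlinarith [sq_nonneg ε]
  -- union bound
  have hbad : μ bad ≤ ENNReal.ofReal δ := by
    have hcard : I.card = k * (2 * (2 ^ M * 2)) := by
      rw [hI_def]
      rw [Finset.card_product, Finset.card_product, Finset.card_product]
      congr 1
      · simp [Nat.card_Icc]
      congr 1
      · rw [Finset.card_insert_of_notMem (by simp; omega), Finset.card_singleton]
      congr 1
      · rw [Finset.card_univ, Fintype.card_finset, Fintype.card_fin]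
      · rw [Finset.card_insert_of_notMem (by norm_num), Finset.card_singleton]
    calc μ bad ≤ ∑ p ∈ I, μ (E p) := measure_biUnion_finset_le I E
      _ ≤ I.card • ENNReal.ofReal (Real.exp (-((k : ℝ) - 1) * ε ^ 2 / 2)) :=
          Finset.sum_le_card_nsmul I _ _ hβ
      _ = (I.card : ENNReal) * ENNReal.ofReal (Real.exp (-((k : ℝ) - 1) * ε ^ 2 / 2)) := by
          rw [nsmul_eq_mul]
      _ = ENNReal.ofReal ((I.card : ℝ) * Real.exp (-((k : ℝ) - 1) * ε ^ 2 / 2)) := by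
          rw [ENNReal.ofReal_mul (by positivity), ENNReal.ofReal_natCast]
      _ ≤ ENNReal.ofReal δ := by
          refine ENNReal.ofReal_le_ofReal ?_
          rw [hcard]
          calc ((k * (2 * (2 ^ M * 2)) : ℕ) : ℝ) * Real.exp (-((k : ℝ) - 1) * ε ^ 2 / 2)
              = 2 ^ (M + 2) * k * Real.exp (-((k : ℝ) - 1) * ε ^ 2 / 2) := by
                push_cast; ring
            _ ≤ δ := hkey
  -- complement is contained in the good set
  have hsub : badᶜ ⊆ {ω | ∀ l ∈ Icc (i + 1) (i + k), ∀ t ∈ ({k - 1, k} : Finset ℕ),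
      tvMix μ ℱ Y l t ω < ε} := by
    intro ω hω
    simp only [Set.mem_compl_iff, hbad_def, Set.mem_iUnion, not_exists] at hω
    intro l hl t ht
    have ht1 : 1 ≤ t := by
      simp only [Finset.mem_insert, Finset.mem_singleton] at ht
      omega
    have htpos : (0 : ℝ) < t := by exact_mod_cast ht1
    -- for each subset S the deviation is < ε
    have hS : ∀ S : Finset (Fin M),
        |trueMix μ ℱ Y l t S ω - empMix Y l t S ω| < ε := by
      intro S
      have h1 : ¬ ((t : ℝ) * ε ≤ devSum μ ℱ Y 1 S l t ω) := by
        have := hω (l, t, S, 1)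
        simp only [hE_def, Set.mem_setOf_eq] at this
        intro hcontra
        exact this (by
          simp only [hI_def, Finset.mem_product]
          exact ⟨hl, ht, Finset.mem_univ S, by simp⟩) hcontra
      have h2 : ¬ ((t : ℝ) * ε ≤ devSum μ ℱ Y (-1) S l t ω) := by
        have := hω (l, t, S, -1)
        simp only [hE_def, Set.mem_setOf_eq] at this
        intro hcontra
        exact this (by
          simp only [hI_def, Finset.mem_product]
          exact ⟨hl, ht, Finset.mem_univ S, by simp⟩) hcontra
      push_neg at h1 h2
      have hD1 : devSum μ ℱ Y 1 S l t ω
          = ∑ τ ∈ Icc (l + 1) (l + t), (probeP μ ℱ Y S τ ω - probeZ Y S τ ω) := by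
        unfold devSum; simp
      have hD2 : devSum μ ℱ Y (-1) S l t ω
          = -∑ τ ∈ Icc (l + 1) (l + t), (probeP μ ℱ Y S τ ω - probeZ Y S τ ω) := by
        unfold devSum
        rw [← Finset.sum_neg_distrib]
        exact Finset.sum_congr rfl fun τ _ => by ring
      rw [hD1] at h1
      rw [hD2] at h2
      have hdiff : trueMix μ ℱ Y l t S ω - empMix Y l t S ω
          = (1 / (t : ℝ)) * ∑ τ ∈ Icc (l + 1) (l + t),
              (probeP μ ℱ Y S τ ω - probeZ Y S τ ω) := by
        unfold trueMix empMix
        rw [← mul_sub, ← Finset.sum_sub_distrib]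
      rw [hdiff, abs_mul, abs_of_pos (by positivity : (0:ℝ) < 1 / (t:ℝ))]
      have habs : |∑ τ ∈ Icc (l + 1) (l + t), (probeP μ ℱ Y S τ ω - probeZ Y S τ ω)|
          < (t : ℝ) * ε := abs_lt.2 ⟨by linarith, h1⟩
      calc (1 / (t : ℝ)) * |∑ τ ∈ Icc (l + 1) (l + t),
              (probeP μ ℱ Y S τ ω - probeZ Y S τ ω)|
          < (1 / (t : ℝ)) * ((t : ℝ) * ε) :=
            mul_lt_mul_of_pos_left habs (by positivity)
        _ = ε := by field_simp
    -- finite supremum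
    obtain ⟨S₀, hS₀⟩ := Finite.exists_max
      (fun S : Finset (Fin M) => |trueMix μ ℱ Y l t S ω - empMix Y l t S ω|)
    exact lt_of_le_of_lt (ciSup_le hS₀) (hS S₀)
  -- put everything together
  calc ENNReal.ofReal (1 - δ) = 1 - ENNReal.ofReal δ := by
        rw [ENNReal.ofReal_sub _ hδ0.le, ENNReal.ofReal_one]
    _ ≤ 1 - μ bad := tsub_le_tsub_left hbad 1
    _ = μ badᶜ := (prob_compl_eq_one_sub hbad_meas).symm
    _ ≤ _ := measure_mono hsub
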